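/- Let n > 2 be an integer with gcd(n, 3) = 1, let γ : ℝ → ℝ² be the tricuspoid parametrization γ(φ) = (2cos φ + cos 2φ, 2sin φ − sin 2φ), and let φ ∈ [0, 2π/3] satisfy ∫₀^φ ‖γ'(ψ)‖ dψ = 16/n. Then the x-coordinate x = 2cos φ + cos 2φ of the first n-division point of the tricuspoid is algebraic of degree 3 over ℚ; in particular, the degree [ℚ(x) : ℚ] = 3 is not a power of 2, so x is not a constructible number. -/

import Mathlib

open Real

/-- A real number is constructible with straightedge and compass iff it can be
obtained from the rationals by field operations and taking square roots. -/
inductive IsConstructible : ℝ → Prop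
  | rat (q : ℚ) : IsConstructible (q : ℝ)
  | add {a b : ℝ} : IsConstructible a → IsConstructible b → IsConstructible (a + b)
  | neg {a : ℝ} : IsConstructible a → IsConstructible (-a)
  | mul {a b : ℝ} : IsConstructible a → IsConstructible b → IsConstructible (a * b)
  | inv {a : ℝ} : IsConstructible a → IsConstructible a⁻¹
  | sqrt {a : ℝ} : 0 ≤ a → IsConstructible a → IsConstructible (Real.sqrt a)

section Aux

open Polynomial IntermediateField Module

noncomputable def rsEquiv {K1 : IntermediateField ℚ ℝ} (L : IntermediateField K1 ℝ) :
    (L.restrictScalars ℚ) ≃ₗ[ℚ] L where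
  toFun x := ⟨x.1, x.2⟩
  invFun x := ⟨x.1, x.2⟩
  map_add' _ _ := rfl
  map_smul' _ _ := rfl
  left_inv _ := rfl
  right_inv _ := rfl

def Good (K : IntermediateField ℚ ℝ) : Prop :=
  FiniteDimensional ℚ K ∧ ∃ k : ℕ, Module.finrank ℚ K = 2 ^ k

set_option maxHeartbeats 1000000 in
lemma isConstructible_mem {a : ℝ} (h : IsConstructible a) :
    ∀ K : IntermediateField ℚ ℝ, Good K → ∃ K', Good K' ∧ K ≤ K' ∧ a ∈ K' := by
  induction h with
  | rat q => exact fun K hK => ⟨K, hK, le_rfl, by simpa using K.algebraMap_mem q⟩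
  | add ha hb iha ihb =>
    intro K hK
    obtain ⟨K1, h1, le1, m1⟩ := iha K hK
    obtain ⟨K2, h2, le2, m2⟩ := ihb K1 h1
    exact ⟨K2, h2, le1.trans le2, add_mem (le2 m1) m2⟩
  | neg ha iha =>
    intro K hK
    obtain ⟨K1, h1, le1, m1⟩ := iha K hK
    exact ⟨K1, h1, le1, neg_mem m1⟩
  | mul ha hb iha ihb =>
    intro K hK
    obtain ⟨K1, h1, le1, m1⟩ := iha K hK
    obtain ⟨K2, h2, le2, m2⟩ := ihb K1 h1
    exact ⟨K2, h2, le1.trans le2, mul_mem (le2 m1) m2⟩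
  | inv ha iha =>
    intro K hK
    obtain ⟨K1, h1, le1, m1⟩ := iha K hK
    exact ⟨K1, h1, le1, inv_mem m1⟩
  | @sqrt a h0 ha iha =>
    intro K hK
    obtain ⟨K1, ⟨hfd, k, hk⟩, le1, m1⟩ := iha K hK
    set s := Real.sqrt a with hs
    have hs2 : s * s = a := Real.mul_self_sqrt h0
    have hmon : (Polynomial.X ^ 2 - Polynomial.C (⟨a, m1⟩ : K1)).Monic :=
      Polynomial.monic_X_pow_sub_C _ two_ne_zero
    have hroot : Polynomial.aeval s (Polynomial.X ^ 2 - Polynomial.C (⟨a, m1⟩ : K1)) = 0 := by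
      simp [sq, hs2]
    have hint : IsIntegral K1 s := ⟨_, hmon, by simpa using hroot⟩
    haveI : FiniteDimensional K1 K1⟮s⟯ := IntermediateField.adjoin.finiteDimensional hint
    haveI : FiniteDimensional ℚ K1⟮s⟯ := FiniteDimensional.trans ℚ K1 K1⟮s⟯
    haveI : FiniteDimensional ℚ (K1⟮s⟯.restrictScalars ℚ) :=
      Module.Finite.equiv (rsEquiv K1⟮s⟯).symm
    refine ⟨K1⟮s⟯.restrictScalars ℚ, ⟨inferInstance, ?_⟩, ?_, ?_⟩
    · have hdeg : finrank K1 K1⟮s⟯ ≤ 2 := by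
        rw [IntermediateField.adjoin.finrank hint]
        have hmin := minpoly.min (A := K1) s hmon hroot
        calc (minpoly K1 s).natDegree
            ≤ (Polynomial.X ^ 2 - Polynomial.C (⟨a, m1⟩ : K1)).natDegree :=
              Polynomial.natDegree_le_natDegree hmin
          _ = 2 := Polynomial.natDegree_X_pow_sub_C
      have hpos : 0 < finrank K1 K1⟮s⟯ := finrank_pos
      have hmul : finrank ℚ (K1⟮s⟯.restrictScalars ℚ) = finrank ℚ K1 * finrank K1 K1⟮s⟯ := by
        rw [(rsEquiv K1⟮s⟯).finrank_eq]
        exact (Module.finrank_mul_finrank ℚ K1 K1⟮s⟯).symm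
      have hcase : finrank K1 K1⟮s⟯ = 1 ∨ finrank K1 K1⟮s⟯ = 2 := by omega
      rcases hcase with hd | hd
      · exact ⟨k, by rw [hmul, hd, mul_one, hk]⟩
      · exact ⟨k + 1, by rw [hmul, hd, hk, pow_succ]⟩
    · intro y hy
      have hy1 : y ∈ K1 := le1 hy
      exact IntermediateField.algebraMap_mem K1⟮s⟯ ⟨y, hy1⟩
    · exact IntermediateField.mem_adjoin_simple_self K1 s

lemma no_int_root (n : ℕ) (h3 : Nat.gcd n 3 = 1) (m : ℤ)
    (hm : m ^ 3 - 3 * (n:ℤ)^2 * m - (2*(n:ℤ)^3 - 48*(n:ℤ)^2 + 144*(n:ℤ)) = 0) : False := by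
  have h3n : ¬ (3 : ℤ) ∣ (n : ℤ) := by
    intro h
    have h' : (3:ℕ) ∣ n := by exact_mod_cast h
    have := Nat.dvd_gcd h' (dvd_refl 3)
    omega
  have key : ∀ a b : ZMod 3, a^3 - 3*b^2*a - (2*b^3 - 48*b^2 + 144*b) = 0 → a + b = 0 := by decide
  have h1 : (3 : ℤ) ∣ m + (n : ℤ) := by
    have hc : ((m : ZMod 3)) ^ 3 - 3 * ((n : ZMod 3))^2 * (m : ZMod 3)
        - (2*((n : ZMod 3))^3 - 48*((n : ZMod 3))^2 + 144*((n : ZMod 3))) = 0 := by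
      have := congrArg (Int.cast : ℤ → ZMod 3) hm
      push_cast at this
      convert this using 2
    have := key _ _ hc
    have : ((m + (n:ℤ) : ℤ) : ZMod 3) = 0 := by push_cast; exact this
    exact (ZMod.intCast_zmod_eq_zero_iff_dvd _ 3).mp this
  obtain ⟨k, hk⟩ := h1
  have hm' : m = 3 * k - n := by omega
  subst hm'
  -- now: 27k³ - 27k²n + 48n² - 144n = 0
  have h9 : (3:ℤ) * (n:ℤ)^2 = 9 * (-3*k^3 + 3*k^2*(n:ℤ) - 5*(n:ℤ)^2 + 16*(n:ℤ)) := by ring_nf; linarith [hm]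
  have : (3:ℤ) ∣ (n:ℤ)^2 := ⟨(-3*k^3 + 3*k^2*(n:ℤ) - 5*(n:ℤ)^2 + 16*(n:ℤ)), by linarith⟩
  have := (Int.Prime.dvd_pow' (by norm_num) this : (3:ℤ) ∣ (n:ℤ))
  exact h3n this

lemma cubic_minpoly (n : ℕ) (h3 : Nat.gcd n 3 = 1) (y : ℝ)
    (hy : y ^ 3 - 3 * (n:ℝ)^2 * y - (2*(n:ℝ)^3 - 48*(n:ℝ)^2 + 144*(n:ℝ)) = 0) :
    IsIntegral ℚ y ∧ (minpoly ℚ y).natDegree = 3 := by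
  set Pz : ℤ[X] := X^3 - C (3*(n:ℤ)^2) * X - C (2*(n:ℤ)^3 - 48*(n:ℤ)^2 + 144*(n:ℤ)) with hPz
  have hmz : Pz.Monic := by unfold Pz; monicity!
  set P : ℚ[X] := Pz.map (algebraMap ℤ ℚ) with hP
  have hm : P.Monic := hmz.map _
  have hdeg : P.natDegree = 3 := by
    rw [hP, hmz.natDegree_map]
    unfold Pz
    compute_degree!
  have haev : Polynomial.aeval y P = 0 := by
    rw [hP, aeval_map_algebraMap]
    simp only [hPz, map_sub, map_mul, map_pow, aeval_X, aeval_C]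
    simp only [eq_intCast]
    push_cast
    linear_combination hy
  have hroots : P.roots = 0 := by
    rw [Multiset.eq_zero_iff_forall_notMem]
    intro q hq
    have hq0 : Polynomial.aeval q Pz = 0 := by
      have := (mem_roots hm.ne_zero).mp hq
      rwa [hP, IsRoot.def, eval_map, ← aeval_def] at this
    obtain ⟨m, hm', -⟩ := exists_integer_of_is_root_of_monic hmz hq0
    rw [hm'] at hq0
    have : ((Pz.eval m : ℤ) : ℚ) = 0 := by
      rw [aeval_algebraMap_apply_eq_algebraMap_eval] at hq0
      simpa using hq0
    have hz : Pz.eval m = 0 := by exact_mod_cast this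
    apply no_int_root n h3 m
    simpa [hPz] using hz
  have hirr : Irreducible P :=
    (Polynomial.irreducible_iff_roots_eq_zero_of_degree_le_three (by omega) (by omega)).mpr hroots
  have hmin : minpoly ℚ y = P := (minpoly.eq_of_irreducible_of_monic hirr haev hm).symm
  exact ⟨⟨P, hm, by rwa [← aeval_def]⟩, by rw [hmin, hdeg]⟩

lemma x_deg_three (n : ℕ) (hn : 2 < n) (h3 : Nat.gcd n 3 = 1) (c x : ℝ)
    (hc : 4*c^3 - 3*c = 2*(((n:ℝ)-6)/n)^2 - 1)
    (hx : x = 2*c^2 + 2*c - 1) :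
    IsAlgebraic ℚ x ∧ (minpoly ℚ x).natDegree = 3 := by
  have n0 : (n:ℝ) ≠ 0 := by positivity
  set y : ℝ := 2*(n:ℝ)*c with hy
  have hyeq : y ^ 3 - 3 * (n:ℝ)^2 * y - (2*(n:ℝ)^3 - 48*(n:ℝ)^2 + 144*(n:ℝ)) = 0 := by
    have hc' : (n:ℝ)^2 * (4*c^3 - 3*c) = 2*((n:ℝ)-6)^2 - (n:ℝ)^2 := by
      field_simp at hc
      linarith [hc]
    rw [hy]
    linear_combination 2*(n:ℝ) * hc'
  obtain ⟨hyint, hydeg⟩ := cubic_minpoly n h3 y hyeq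
  haveI : FiniteDimensional ℚ ℚ⟮y⟯ := IntermediateField.adjoin.finiteDimensional hyint
  have hfr : finrank ℚ ℚ⟮y⟯ = 3 := by rw [IntermediateField.adjoin.finrank hyint, hydeg]
  -- x in ℚ⟮y⟯
  have hq1 : ((1/(2*(n:ℚ)^2) : ℚ) : ℝ) = 1/(2*(n:ℝ)^2) := by push_cast; ring
  have hxeq : x = ((1/(2*(n:ℚ)^2) : ℚ) : ℝ) * y^2 + ((1/(n:ℚ) : ℚ) : ℝ) * y - 1 := by
    rw [hx, hy]; push_cast; field_simp
  have hymem : y ∈ ℚ⟮y⟯ := IntermediateField.mem_adjoin_simple_self ℚ y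
  have hratmem : ∀ q : ℚ, ((q:ℝ)) ∈ ℚ⟮y⟯ := fun q => by
    simpa using IntermediateField.algebraMap_mem ℚ⟮y⟯ q
  have hxmem : x ∈ ℚ⟮y⟯ := by
    rw [hxeq]
    exact sub_mem (add_mem (mul_mem (hratmem _) (pow_mem hymem 2))
      (mul_mem (hratmem _) hymem)) (one_mem _)
  set x' : ℚ⟮y⟯ := ⟨x, hxmem⟩ with hx'
  have hmx : minpoly ℚ x = minpoly ℚ x' := by
    have := minpoly.algebraMap_eq (A := ℚ) (algebraMap ℚ⟮y⟯ ℝ).injective x'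
    rw [← this]; rfl
  have hxint : IsIntegral ℚ x' := IsIntegral.of_finite ℚ x'
  have hdvd : (minpoly ℚ x').natDegree ∣ 3 := hfr ▸ minpoly.degree_dvd hxint
  have hne1 : (minpoly ℚ x').natDegree ≠ 1 := by
    intro h1
    -- then x is rational
    have hrange : x ∈ (algebraMap ℚ ℝ).range :=
      minpoly.natDegree_eq_one_iff.mp (by rw [hmx, h1])
    obtain ⟨q, hq⟩ := hrange
    have hyq : y^2 + 2*(n:ℝ)*y - 2*(n:ℝ)^2*(1+(q:ℝ)) = 0 := by
      have h := hxeq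
      rw [← hq] at h
      simp only [eq_ratCast] at h
      push_cast at h
      field_simp at h
      have h2 : (n:ℝ) * (y^2 + 2*(n:ℝ)*y - 2*(n:ℝ)^2*(1+(q:ℝ))) = 0 := by
        linear_combination -(n:ℝ) * h
      rcases mul_eq_zero.mp h2 with h3 | h3
      · exact absurd h3 n0
      · exact h3
    -- y is a root of a monic quadratic
    have hQroot : Polynomial.aeval y
        (X^2 + C (2*(n:ℚ)) * X - C (2*(n:ℚ)^2*(1+q)) : ℚ[X]) = 0 := by
      simp only [map_sub, map_add, map_mul, map_pow, aeval_X, aeval_C, eq_ratCast]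
      push_cast
      linear_combination hyq
    have hQmon : (X^2 + C (2*(n:ℚ)) * X - C (2*(n:ℚ)^2*(1+q)) : ℚ[X]).Monic := by monicity!
    have hmin := minpoly.min (A := ℚ) y hQmon hQroot
    have : (minpoly ℚ y).natDegree ≤ 2 := by
      calc (minpoly ℚ y).natDegree
          ≤ (X^2 + C (2*(n:ℚ)) * X - C (2*(n:ℚ)^2*(1+q)) : ℚ[X]).natDegree :=
            Polynomial.natDegree_le_natDegree hmin
        _ ≤ 2 := by compute_degree
    omega
  have hdeg3 : (minpoly ℚ x').natDegree = 3 := by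
    rcases (Nat.prime_three.eq_one_or_self_of_dvd _ hdvd) with h | h
    · exact absurd h hne1
    · exact h
  refine ⟨?_, by rw [hmx, hdeg3]⟩
  rw [hmx] at *
  exact (hxint.map (IsScalarTower.toAlgHom ℚ ℚ⟮y⟯ ℝ)).isAlgebraic

lemma arc_eq (n : ℕ) (hn : 2 < n)
    (γ : ℝ → EuclideanSpace ℝ (Fin 2))
    (hγ : ∀ φ : ℝ, γ φ =
      ![2 * Real.cos φ + Real.cos (2 * φ),
        2 * Real.sin φ - Real.sin (2 * φ)])
    (φ : ℝ) (hφ0 : 0 ≤ φ) (hφ1 : φ ≤ 2 * π / 3)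
    (hs : (∫ ψ in (0 : ℝ)..φ, ‖deriv γ ψ‖) = 16 / (n : ℝ)) :
    Real.cos (3 * φ / 2) = ((n:ℝ) - 6) / n := by
  have n0 : (n:ℝ) ≠ 0 := by positivity
  -- derivative
  have h2 : ∀ t : ℝ, HasDerivAt (fun s : ℝ => 2 * s) 2 t := fun t => by
    simpa using (hasDerivAt_id t).const_mul (2:ℝ)
  have hd : ∀ ψ : ℝ, HasDerivAt γ
      ((EuclideanSpace.equiv (Fin 2) ℝ).symm
        ![-2 * Real.sin ψ - 2 * Real.sin (2 * ψ),
          2 * Real.cos ψ - 2 * Real.cos (2 * ψ)]) ψ := by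
    intro ψ
    have hγ' : γ = fun t => (EuclideanSpace.equiv (Fin 2) ℝ).symm
        ![2 * Real.cos t + Real.cos (2 * t), 2 * Real.sin t - Real.sin (2 * t)] := by
      funext t; rw [← hγ t]; rfl
    rw [hγ']
    have hf : HasDerivAt (fun t => 2 * Real.cos t + Real.cos (2 * t))
        (-2 * Real.sin ψ - 2 * Real.sin (2 * ψ)) ψ := by
      have := ((Real.hasDerivAt_cos ψ).const_mul (2:ℝ)).add
        ((Real.hasDerivAt_cos (2*ψ)).comp ψ (h2 ψ))
      exact this.congr_deriv (by ring)
    have hg : HasDerivAt (fun t => 2 * Real.sin t - Real.sin (2 * t))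
        (2 * Real.cos ψ - 2 * Real.cos (2 * ψ)) ψ := by
      have := ((Real.hasDerivAt_sin ψ).const_mul (2:ℝ)).sub
        ((Real.hasDerivAt_sin (2*ψ)).comp ψ (h2 ψ))
      exact this.congr_deriv (by ring)
    have hpi : HasDerivAt (fun t => (![2 * Real.cos t + Real.cos (2 * t),
        2 * Real.sin t - Real.sin (2 * t)] : Fin 2 → ℝ))
        (![-2 * Real.sin ψ - 2 * Real.sin (2 * ψ), 2 * Real.cos ψ - 2 * Real.cos (2 * ψ)]) ψ := by
      rw [hasDerivAt_pi]
      intro i; fin_cases i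
      · simpa using hf
      · simpa using hg
    exact ((EuclideanSpace.equiv (Fin 2) ℝ).symm.toContinuousLinearMap.hasFDerivAt).comp_hasDerivAt
      ψ hpi
  -- norm
  have hnorm : ∀ ψ ∈ Set.uIcc (0:ℝ) φ, ‖deriv γ ψ‖ = 4 * Real.sin (3 * ψ / 2) := by
    intro ψ hψ
    rw [Set.uIcc_of_le hφ0] at hψ
    obtain ⟨hψ0, hψφ⟩ := hψ
    rw [(hd ψ).deriv]
    have e1 : ‖(EuclideanSpace.equiv (Fin 2) ℝ).symm
        ![-2 * Real.sin ψ - 2 * Real.sin (2 * ψ), 2 * Real.cos ψ - 2 * Real.cos (2 * ψ)]‖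
        = Real.sqrt ((-2 * Real.sin ψ - 2 * Real.sin (2 * ψ))^2
          + (2 * Real.cos ψ - 2 * Real.cos (2 * ψ))^2) := by
      rw [EuclideanSpace.norm_eq]
      norm_num [Fin.sum_univ_two, sq_abs]
    rw [e1]
    have e2 : (-2 * Real.sin ψ - 2 * Real.sin (2 * ψ))^2
        + (2 * Real.cos ψ - 2 * Real.cos (2 * ψ))^2 = 8 - 8 * Real.cos (3 * ψ) := by
      have h3 : Real.cos (3 * ψ) = Real.cos ψ * Real.cos (2*ψ) - Real.sin ψ * Real.sin (2*ψ) := by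
        rw [show (3:ℝ) * ψ = ψ + 2*ψ by ring, Real.cos_add]
      have hs1 := Real.sin_sq_add_cos_sq ψ
      have hs2 := Real.sin_sq_add_cos_sq (2*ψ)
      rw [h3]; nlinarith [hs1, hs2]
    have e3 : Real.cos (3 * ψ) = 1 - 2 * Real.sin (3 * ψ / 2)^2 := by
      have hcc := Real.cos_two_mul (3 * ψ / 2)
      rw [show 2 * (3 * ψ / 2) = 3 * ψ by ring] at hcc
      have hpy := Real.sin_sq_add_cos_sq (3 * ψ / 2)
      nlinarith [hcc, hpy]
    have hsin : 0 ≤ Real.sin (3 * ψ / 2) := by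
      apply Real.sin_nonneg_of_nonneg_of_le_pi
      · linarith
      · linarith
    rw [e2, e3, show 8 - 8*(1 - 2 * Real.sin (3 * ψ / 2)^2) = (4 * Real.sin (3 * ψ / 2))^2 by ring]
    exact Real.sqrt_sq (by linarith)
  -- integral
  have hint : (∫ ψ in (0:ℝ)..φ, 4 * Real.sin (3 * ψ / 2))
      = (8/3) - (8/3) * Real.cos (3 * φ / 2) := by
    have hF : ∀ t : ℝ, HasDerivAt (fun s : ℝ => -(8/3) * Real.cos (3 * s / 2))
        (4 * Real.sin (3 * t / 2)) t := by
      intro t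
      have harg : HasDerivAt (fun s : ℝ => 3 * s / 2) (3/2 : ℝ) t := by
        simpa using ((hasDerivAt_id t).const_mul (3:ℝ)).div_const 2
      have := ((Real.hasDerivAt_cos (3*t/2)).comp t harg).const_mul (-(8/3) : ℝ)
      exact this.congr_deriv (by ring)
    rw [intervalIntegral.integral_eq_sub_of_hasDerivAt (fun t _ => hF t)
      ((Continuous.intervalIntegrable (by fun_prop) 0 φ))]
    norm_num [Real.cos_zero]
    ring_nf
  rw [intervalIntegral.integral_congr (μ := MeasureTheory.volume) hnorm, hint] at hs
  rw [eq_div_iff n0]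
  field_simp at hs
  nlinarith [hs]

lemma degree_pow_two_of_isConstructible {x : ℝ} (h : IsConstructible x) :
    ∃ k : ℕ, (minpoly ℚ x).natDegree = 2 ^ k := by
  have hbot : Good ⊥ := ⟨inferInstance, 0, by simpa using IntermediateField.finrank_bot⟩
  obtain ⟨K, hK, -, hxK⟩ := isConstructible_mem h ⊥ hbot
  obtain ⟨hfd, k, hk⟩ := hK
  set x' : K := ⟨x, hxK⟩ with hx'
  have hxx : x = algebraMap K ℝ x' := rfl
  have h1 : minpoly ℚ x = minpoly ℚ x' := by
    rw [hxx]
    exact minpoly.algebraMap_eq (algebraMap K ℝ).injective x'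
  have hdvd : (minpoly ℚ x').natDegree ∣ finrank ℚ K := minpoly.degree_dvd (IsIntegral.of_finite ℚ x')
  rw [hk] at hdvd
  obtain ⟨j, -, hj⟩ := (Nat.dvd_prime_pow Nat.prime_two).mp hdvd
  exact ⟨j, by rw [h1, hj]⟩

end Aux

/-- For `n > 2` with `gcd(n,3) = 1`, the `x`-coordinate of the first
`n`-division point of the tricuspoid has degree `3` over `ℚ`, which is not a
power of `2`, hence it is not a constructible number. -/
theorem tricuspoid_division_point_x_not_constructible
    (n : ℕ) (hn : 2 < n) (h3 : Nat.gcd n 3 = 1)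
    (γ : ℝ → EuclideanSpace ℝ (Fin 2))
    (hγ : ∀ φ : ℝ, γ φ =
      ![2 * Real.cos φ + Real.cos (2 * φ),
        2 * Real.sin φ - Real.sin (2 * φ)])
    (φ : ℝ) (hφ0 : 0 ≤ φ) (hφ1 : φ ≤ 2 * π / 3)
    (hs : (∫ ψ in (0 : ℝ)..φ, ‖deriv γ ψ‖) = 16 / (n : ℝ))
    (x : ℝ) (hx : x = 2 * Real.cos φ + Real.cos (2 * φ)) :
    IsAlgebraic ℚ x ∧ (minpoly ℚ x).natDegree = 3 ∧
      (¬ ∃ k : ℕ, (minpoly ℚ x).natDegree = 2 ^ k) ∧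
      ¬ IsConstructible x := by
  have hcos32 := arc_eq n hn γ hγ φ hφ0 hφ1 hs
  have hc : 4*(Real.cos φ)^3 - 3*(Real.cos φ) = 2*(((n:ℝ)-6)/n)^2 - 1 := by
    have h1 := Real.cos_three_mul φ
    have h2 := Real.cos_two_mul (3*φ/2)
    rw [show 2*(3*φ/2) = 3*φ by ring] at h2
    rw [hcos32] at h2
    linarith [h1, h2]
  have hx' : x = 2*(Real.cos φ)^2 + 2*(Real.cos φ) - 1 := by
    rw [hx, Real.cos_two_mul]; ring
  obtain ⟨halg, hdeg⟩ := x_deg_three n hn h3 (Real.cos φ) x hc hx'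
  have hnp : ¬ ∃ k : ℕ, (minpoly ℚ x).natDegree = 2 ^ k := by
    rintro ⟨k, hk⟩
    rw [hdeg] at hk
    rcases le_or_gt k 1 with h | h
    · have : 2^k ≤ 2^1 := Nat.pow_le_pow_right (by norm_num) h
      omega
    · have : 2^2 ≤ 2^k := Nat.pow_le_pow_right (by norm_num) h
      omega
  refine ⟨halg, hdeg, hnp, fun hcon => ?_⟩
  exact hnp (degree_pow_two_of_isConstructible hcon)
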